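/- Let E be a real Banach space, F ⊆ E a linear subspace, J ⊆ ℝ a set, α₀ ∈ J an accumulation point of J, and 0 ≤ λ < 1. Let (K_α)_{α∈J} be bounded linear operators on E such that: (i) ‖K_α‖ ≤ λ for all α ∈ J; (ii) K_α maps F into F for all α ∈ J; (iii) for every v ∈ F, K_α v → K_{α₀} v in E as α → α₀ in J. Let r : J → E satisfy r(α₀) = 0, r(α) ∈ F for all α ∈ J, and suppose there exists τ₀ ∈ E such that (α − α₀)⁻¹ r(α) → τ₀ in E as α → α₀ in J \ {α₀}. Let δ : J → E satisfy δ(α) = K_α δ(α) + r(α) for every α ∈ J. Then δ(α₀) = 0, and the difference quotients (α − α₀)⁻¹ δ(α) converge in E, as α → α₀ in J \ {α₀}, to (Id_E − K_{α₀})⁻¹ τ₀ = ∑_{n=0}^∞ K_{α₀}^n τ₀; in particular the map α ↦ δ(α) is differentiable at α₀ in E. -/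

import Mathlib

open Filter

/-- Abstract linear response (Theorem B): given a family of bounded operators `K_α` on a
Banach space `E` with `‖K_α‖ ≤ λ < 1`, preserving a subspace `F`, strongly continuous at
`α₀` on `F`, a remainder `r(α) ∈ F` with `r(α₀) = 0` whose difference quotients converge
to `τ₀`, and `δ` solving `δ(α) = K_α δ(α) + r(α)` on `J`, then `δ(α₀) = 0` and the
difference quotients `(α−α₀)⁻¹ δ(α)` converge to `(Id − K_{α₀})⁻¹ τ₀ = ∑ₙ K_{α₀}ⁿ τ₀`;
in particular `α ↦ δ(α)` is differentiable at `α₀` in `E`. -/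
theorem abstract_linear_response
    {E : Type*} [NormedAddCommGroup E] [NormedSpace ℝ E] [CompleteSpace E]
    (F : Submodule ℝ E) (J : Set ℝ) (α₀ : ℝ) (hα₀ : α₀ ∈ J)
    (hacc : (nhdsWithin α₀ (J \ {α₀})).NeBot)
    (lam : ℝ) (hlam0 : 0 ≤ lam) (hlam1 : lam < 1)
    (K : ℝ → E →L[ℝ] E)
    (hKnorm : ∀ α ∈ J, ‖K α‖ ≤ lam)
    (hKF : ∀ α ∈ J, ∀ v ∈ F, K α v ∈ F)
    (hKcont : ∀ v ∈ F,
      Tendsto (fun α => K α v) (nhdsWithin α₀ J) (nhds (K α₀ v)))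
    (r : ℝ → E) (hr0 : r α₀ = 0) (hrF : ∀ α ∈ J, r α ∈ F)
    (τ₀ : E)
    (hτ : Tendsto (fun α => (α - α₀)⁻¹ • r α) (nhdsWithin α₀ (J \ {α₀})) (nhds τ₀))
    (δ : ℝ → E) (hδ : ∀ α ∈ J, δ α = K α (δ α) + r α) :
    δ α₀ = 0 ∧
      Tendsto (fun α => (α - α₀)⁻¹ • δ α) (nhdsWithin α₀ (J \ {α₀}))
        (nhds (∑' n : ℕ, ((K α₀) ^ n) τ₀)) := by
  set K₀ := K α₀ with hK₀
  have hK₀norm : ‖K₀‖ ≤ lam := hKnorm α₀ hα₀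
  have hone : (0:ℝ) < 1 - lam := by linarith
  -- δ α₀ = 0
  have hδ0 : δ α₀ = 0 := by
    have h1 : δ α₀ = K₀ (δ α₀) := by
      have := hδ α₀ hα₀; rw [hr0, add_zero] at this; exact this
    by_contra hne
    have hpos : 0 < ‖δ α₀‖ := norm_pos_iff.2 hne
    have : ‖δ α₀‖ ≤ lam * ‖δ α₀‖ := by
      calc ‖δ α₀‖ = ‖K₀ (δ α₀)‖ := by rw [← h1]
        _ ≤ ‖K₀‖ * ‖δ α₀‖ := K₀.le_opNorm _
        _ ≤ lam * ‖δ α₀‖ := by nlinarith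
    nlinarith
  -- norm bound on iterates
  have hpow : ∀ n : ℕ, ‖(K₀ ^ n) τ₀‖ ≤ lam ^ n * ‖τ₀‖ := by
    intro n
    induction n with
    | zero => simp
    | succ n ih =>
      have h1 : (K₀ ^ (n+1)) τ₀ = K₀ ((K₀ ^ n) τ₀) := by
        rw [pow_succ']; rfl
      calc ‖(K₀ ^ (n+1)) τ₀‖ = ‖K₀ ((K₀ ^ n) τ₀)‖ := by rw [h1]
        _ ≤ ‖K₀‖ * ‖(K₀ ^ n) τ₀‖ := K₀.le_opNorm _
        _ ≤ lam * (lam ^ n * ‖τ₀‖) := by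
            have := norm_nonneg ((K₀ ^ n) τ₀)
            nlinarith
        _ = lam ^ (n+1) * ‖τ₀‖ := by ring
  have hsum : Summable fun n : ℕ => (K₀ ^ n) τ₀ :=
    Summable.of_norm_bounded
      ((summable_geometric_of_lt_one hlam0 hlam1).mul_right ‖τ₀‖) hpow
  set x := ∑' n : ℕ, (K₀ ^ n) τ₀ with hx
  have hsucc : ∀ n : ℕ, K₀ ((K₀ ^ n) τ₀) = (K₀ ^ (n+1)) τ₀ := by
    intro n; rw [pow_succ']; rfl
  -- fixed point equation for x
  have hKx : K₀ x = ∑' n : ℕ, (K₀ ^ (n+1)) τ₀ := by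
    rw [hx, K₀.map_tsum hsum]
    exact tsum_congr hsucc
  have hfix : x = K₀ x + τ₀ := by
    conv_lhs => rw [hx, Summable.tsum_eq_zero_add hsum]
    rw [hKx]
    simp [add_comm]
  -- τ₀ ∈ closure F
  have hsF : ∀ α ∈ J, (α - α₀)⁻¹ • r α ∈ F := fun α hα => F.smul_mem _ (hrF α hα)
  have hτ₀cl : τ₀ ∈ closure (F : Set E) := by
    refine mem_closure_of_tendsto hτ ?_
    filter_upwards [self_mem_nhdsWithin] with α hα
    exact hsF α hα.1
  -- closure F stable under K₀, hence x ∈ closure F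
  have hK₀cl : Set.MapsTo K₀ (closure (F : Set E)) (closure (F : Set E)) :=
    Set.MapsTo.closure (fun v hv => hKF α₀ hα₀ v hv) K₀.continuous
  have hpowcl : ∀ n : ℕ, (K₀ ^ n) τ₀ ∈ closure (F : Set E) := by
    intro n
    induction n with
    | zero => simpa using hτ₀cl
    | succ n ih =>
      rw [← hsucc n]; exact hK₀cl ih
  have hxcl : x ∈ closure (F : Set E) := by
    have hxmem : x ∈ (F.topologicalClosure : Set E) := by
      refine IsClosed.mem_of_tendsto F.isClosed_topologicalClosure
        hsum.hasSum.tendsto_sum_nat ?_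
      filter_upwards with n
      refine sum_mem fun i _ => ?_
      rw [← SetLike.mem_coe, Submodule.topologicalClosure_coe]
      exact hpowcl i
    rwa [Submodule.topologicalClosure_coe] at hxmem
  -- strong convergence on closure F
  have hcl_cont : ∀ w ∈ closure (F : Set E),
      Tendsto (fun α => K α w) (nhdsWithin α₀ J) (nhds (K₀ w)) := by
    intro w hw
    rw [← tendsto_sub_nhds_zero_iff, NormedAddCommGroup.tendsto_nhds_zero]
    intro ε hε
    have hd : (0:ℝ) < ε / (4 * (lam + 1)) := by positivity
    obtain ⟨v, hvF, hvw⟩ := Metric.mem_closure_iff.1 hw _ hd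
    have hvw' : ‖w - v‖ < ε / (4 * (lam + 1)) := by
      rw [← dist_eq_norm]; exact hvw
    have hv0 : Tendsto (fun α => K α v - K₀ v) (nhdsWithin α₀ J) (nhds 0) := by
      rw [tendsto_sub_nhds_zero_iff]; exact hKcont v hvF
    have hv1 := (NormedAddCommGroup.tendsto_nhds_zero.1 hv0) (ε / 2) (by positivity)
    filter_upwards [hv1, self_mem_nhdsWithin] with α hα1 hα2
    have hKα : ‖K α‖ ≤ lam := hKnorm α hα2
    have hwv0 : (0:ℝ) ≤ ‖w - v‖ := norm_nonneg _
    have h1 : K α w - K₀ w = (K α v - K₀ v) + (K α (w - v) - K₀ (w - v)) := by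
      simp [map_sub]; abel
    have h2 : ‖K α (w - v) - K₀ (w - v)‖ ≤ 2 * lam * ‖w - v‖ := by
      calc ‖K α (w - v) - K₀ (w - v)‖ ≤ ‖K α (w - v)‖ + ‖K₀ (w - v)‖ := norm_sub_le _ _
        _ ≤ ‖K α‖ * ‖w - v‖ + ‖K₀‖ * ‖w - v‖ := add_le_add ((K α).le_opNorm _) (K₀.le_opNorm _)
        _ ≤ 2 * lam * ‖w - v‖ := by nlinarith
    have h3 : 2 * lam * ‖w - v‖ < ε / 2 := by
      have h4 : 2 * lam * ‖w - v‖ ≤ 2 * (lam + 1) * ‖w - v‖ := by nlinarith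
      have h5 : 2 * (lam + 1) * ‖w - v‖ < 2 * (lam + 1) * (ε / (4 * (lam + 1))) := by
        apply mul_lt_mul_of_pos_left hvw'; positivity
      have h6 : 2 * (lam + 1) * (ε / (4 * (lam + 1))) = ε / 2 := by
        field_simp; ring
      linarith
    calc ‖K α w - K₀ w‖ ≤ ‖K α v - K₀ v‖ + ‖K α (w - v) - K₀ (w - v)‖ := by
          rw [h1]; exact norm_add_le _ _
      _ < ε / 2 + ε / 2 := add_lt_add_of_lt_of_le hα1 (le_of_lt (lt_of_le_of_lt h2 h3))
      _ = ε := by ring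
  -- the error term g → 0
  set g : ℝ → E := fun α => (K α x - K₀ x) + ((α - α₀)⁻¹ • r α - τ₀) with hg
  have hg0 : Tendsto g (nhdsWithin α₀ (J \ {α₀})) (nhds 0) := by
    have h1 : Tendsto (fun α => K α x - K₀ x) (nhdsWithin α₀ (J \ {α₀})) (nhds 0) := by
      have h := (hcl_cont x hxcl).mono_left (nhdsWithin_mono α₀ (Set.diff_subset : J \ {α₀} ⊆ J))
      rw [← tendsto_sub_nhds_zero_iff] at h
      exact h
    have h2 : Tendsto (fun α => (α - α₀)⁻¹ • r α - τ₀)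
        (nhdsWithin α₀ (J \ {α₀})) (nhds 0) := by
      rw [tendsto_sub_nhds_zero_iff]; exact hτ
    simpa using h1.add h2
  -- pointwise estimate on J \ {α₀}
  have hkey : ∀ᶠ α in nhdsWithin α₀ (J \ {α₀}),
      ‖(α - α₀)⁻¹ • δ α - x‖ ≤ (1 - lam)⁻¹ * ‖g α‖ := by
    filter_upwards [self_mem_nhdsWithin] with α hα
    have hαJ : α ∈ J := hα.1
    have heq : (α - α₀)⁻¹ • δ α
        = K α ((α - α₀)⁻¹ • δ α) + (α - α₀)⁻¹ • r α := by
      conv_lhs => rw [hδ α hαJ]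
      rw [smul_add, map_smul]
    have hgα : g α = (K α x - K₀ x) + ((α - α₀)⁻¹ • r α - τ₀) := rfl
    have heq2 : (α - α₀)⁻¹ • δ α - x
        = K α ((α - α₀)⁻¹ • δ α - x) + g α := by
      rw [map_sub, hgα]
      nth_rewrite 1 [heq]
      nth_rewrite 1 [hfix]
      abel
    have hest : ‖(α - α₀)⁻¹ • δ α - x‖
        ≤ lam * ‖(α - α₀)⁻¹ • δ α - x‖ + ‖g α‖ := by
      calc ‖(α - α₀)⁻¹ • δ α - x‖ = ‖K α ((α - α₀)⁻¹ • δ α - x) + g α‖ := by rw [← heq2]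
        _ ≤ ‖K α ((α - α₀)⁻¹ • δ α - x)‖ + ‖g α‖ := norm_add_le _ _
        _ ≤ lam * ‖(α - α₀)⁻¹ • δ α - x‖ + ‖g α‖ := by
            have h1 := (K α).le_opNorm ((α - α₀)⁻¹ • δ α - x)
            have h2 : ‖K α‖ ≤ lam := hKnorm α hαJ
            nlinarith [norm_nonneg ((α - α₀)⁻¹ • δ α - x)]
    rw [← div_eq_inv_mul, le_div_iff₀ hone]
    nlinarith
  have hgn : Tendsto (fun α => (1 - lam)⁻¹ * ‖g α‖)
      (nhdsWithin α₀ (J \ {α₀})) (nhds 0) := by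
    have h := hg0.norm
    rw [norm_zero] at h
    simpa using h.const_mul ((1 - lam)⁻¹)
  refine ⟨hδ0, ?_⟩
  rw [← tendsto_sub_nhds_zero_iff]
  exact squeeze_zero_norm' hkey hgn
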